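/- Let P be a Polish space and let X ⊆ P be an analytic set such that the subspace X has no isolated points and is countable dense homogeneous. Then the subspace X is a Baire space. -/

import Mathlib

open Set Topology Filter MeasureTheory

/-- A topological space is countable dense homogeneous (CDH) if for any two countable
dense subsets `D`, `D'` there is a self-homeomorphism taking `D` onto `D'`. -/
def IsCDH (X : Type*) [TopologicalSpace X] : Prop :=
  ∀ D D' : Set X, D.Countable → Dense D → D'.Countable → Dense D' →
    ∃ h : X ≃ₜ X, h '' D = D'

namespace CDHBaireAux

/-! ### Generic topological lemmas -/

lemma isGδ_preimage {X Y : Type*} [TopologicalSpace X] [TopologicalSpace Y] {f : X → Y}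
    (hf : Continuous f) {s : Set Y} (hs : IsGδ s) : IsGδ (f ⁻¹' s) := by
  obtain ⟨T, hTo, hTc, rfl⟩ := hs
  rw [preimage_sInter]
  exact IsGδ.biInter_of_isOpen hTc fun t ht => (hTo t ht).preimage hf

lemma isMeagre_image {Y : Type*} [TopologicalSpace Y] (h : Y ≃ₜ Y) {s : Set Y}
    (hs : IsMeagre s) : IsMeagre (⇑h '' s) := by
  rw [IsMeagre, mem_residual_iff] at hs ⊢
  obtain ⟨S, hSo, hSd, hSc, hSsub⟩ := hs
  refine ⟨(fun t => ⇑h '' t) '' S, ?_, ?_, hSc.image _, ?_⟩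
  · rintro _ ⟨t, ht, rfl⟩
    exact (Homeomorph.isOpen_image h).2 (hSo t ht)
  · rintro _ ⟨t, ht, rfl⟩
    have himg : (fun t => ⇑h '' t) t = ⇑h.symm ⁻¹' t := by
      ext w
      constructor
      · rintro ⟨v, hv, rfl⟩
        simpa using hv
      · intro hw
        exact ⟨h.symm w, hw, h.apply_symm_apply w⟩
    rw [himg, dense_iff_closure_eq, ← Homeomorph.preimage_closure, (hSd t ht).closure_eq,
      preimage_univ]
  · intro z hz hzs
    have hz' : ⇑h.symm z ∈ ⋂₀ S := by
      intro t ht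
      obtain ⟨w, hw, hwz⟩ := hz (⇑h '' t) ⟨t, ht, rfl⟩
      rwa [← hwz, Homeomorph.symm_apply_apply]
    obtain ⟨w, hw, rfl⟩ := hzs
    exact hSsub hz' (by rwa [Homeomorph.symm_apply_apply])

lemma not_dense_gdelta {Z : Type*} [TopologicalSpace Z] [BaireSpace Z] [T1Space Z] [Nonempty Z]
    (hiso : ∀ z : Z, ¬ IsOpen ({z} : Set Z)) {A : Set Z} (hc : A.Countable) (hd : Dense A)
    (hG : IsGδ A) : False := by
  have hA : A ∈ residual Z := mem_residual.2 ⟨A, Subset.rfl, hG, hd⟩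
  have hAc : Aᶜ ∈ residual Z := by
    have hEq : Aᶜ = ⋂ x ∈ A, ({x}ᶜ : Set Z) := by
      ext z
      simp only [mem_compl_iff, mem_iInter, mem_singleton_iff]
      exact ⟨fun hz x hx hzx => hz (hzx ▸ hx), fun hz hzA => hz z hzA rfl⟩
    rw [hEq]
    exact (countable_bInter_mem hc).2 fun x _ => residual_of_dense_open
      isOpen_compl_singleton (dense_compl_singleton_iff_not_open.2 (hiso x))
  have hempty : (∅ : Set Z) ∈ residual Z := by
    rw [← inter_compl_self A]; exact Filter.inter_mem hA hAc
  exact Set.not_nonempty_empty (dense_of_mem_residual hempty).nonempty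

lemma cantor_singleton_not_open (x : ℕ → Bool) : ¬ IsOpen ({x} : Set (ℕ → Bool)) := by
  intro hx
  obtain ⟨I, u, hu, hsub⟩ := isOpen_pi_iff.1 hx x rfl
  obtain ⟨n, hn⟩ := Infinite.exists_notMem_finset I
  have hy : Function.update x n (!x n) ∈ (I : Set ℕ).pi u := by
    intro i hi
    rw [Function.update_of_ne (fun h => hn (by rw [← h]; exact hi)) _ _]
    exact (hu i hi).2
  have h1 : Function.update x n (!x n) = x := hsub hy
  have h2 : Function.update x n (!x n) n = x n := by rw [h1]
  rw [Function.update_self] at h2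
  simp at h2

/-! ### Perfect set property for analytic sets -/

lemma exists_two_condensation {α : Type*} [TopologicalSpace α]
    [SecondCountableTopology α] {S : Set α} (hS : ¬ S.Countable) :
    ∃ y₀ y₁ : α, y₀ ≠ y₁ ∧ (∀ O : Set α, IsOpen O → y₀ ∈ O → ¬ (S ∩ O).Countable) ∧
      (∀ O : Set α, IsOpen O → y₁ ∈ O → ¬ (S ∩ O).Countable) := by
  obtain ⟨b, hbc, -, hb⟩ := TopologicalSpace.exists_countable_basis α
  set K : Set α := ⋃₀ {B ∈ b | (S ∩ B).Countable} with hK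
  have hSK : (S ∩ K).Countable := by
    have hEq : S ∩ K = ⋃ B ∈ {B ∈ b | (S ∩ B).Countable}, (S ∩ B) := by
      ext z
      simp only [hK, mem_inter_iff, mem_sUnion, mem_iUnion, mem_setOf_eq, exists_prop]
      tauto
    rw [hEq]
    exact Set.Countable.biUnion (hbc.mono (sep_subset _ _)) fun B hB => hB.2
  have hS' : ¬ (S \ K).Countable := fun h => hS <| by
    have hsub : S ⊆ (S ∩ K) ∪ (S \ K) := fun z hz => by
      by_cases hzK : z ∈ K
      · exact Or.inl ⟨hz, hzK⟩
      · exact Or.inr ⟨hz, hzK⟩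
    exact (hSK.union h).mono hsub
  have hprop : ∀ y ∈ S \ K, ∀ O : Set α, IsOpen O → y ∈ O → ¬ (S ∩ O).Countable := by
    rintro y ⟨hyS, hyK⟩ O hO hyO hc
    obtain ⟨B, hBb, hyB, hBO⟩ := hb.exists_subset_of_mem_open hyO hO
    exact hyK ⟨B, ⟨hBb, hc.mono (inter_subset_inter_right _ hBO)⟩, hyB⟩
  have h1 : (S \ K).Nonempty := nonempty_iff_ne_empty.2 fun h => hS' (h ▸ countable_empty)
  obtain ⟨y₀, hy₀⟩ := h1
  have h2 : ((S \ K) \ {y₀}).Nonempty := nonempty_iff_ne_empty.2 fun h => hS' <| by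
    have hsub : S \ K ⊆ {y₀} := diff_eq_empty.1 h
    exact (countable_singleton y₀).mono hsub
  obtain ⟨y₁, hy₁, hy₁0⟩ := h2
  exact ⟨y₀, y₁, fun h => hy₁0 (by simp [← h]), hprop y₀ hy₀, hprop y₁ hy₁⟩

/-- Basic cylinder of depth `n` around `z` in the Baire space. -/
def cyl (z : ℕ → ℕ) (n : ℕ) : Set (ℕ → ℕ) := {y | ∀ i, i < n → y i = z i}

lemma isOpen_cyl (z : ℕ → ℕ) (n : ℕ) : IsOpen (cyl z n) := by
  have hEq : cyl z n = ⋂ i ∈ Finset.range n, (fun y : ℕ → ℕ => y i) ⁻¹' {z i} := by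
    ext y; simp [cyl]
  rw [hEq]
  exact isOpen_biInter_finset fun i _ =>
    (continuous_apply i).isOpen_preimage _ (isOpen_discrete _)

lemma mem_cyl_self (z : ℕ → ℕ) (n : ℕ) : z ∈ cyl z n := fun _ _ => rfl

lemma shrink {β : Type*} (f : (ℕ → ℕ) → β) {O : Set (ℕ → ℕ)} (hO : IsOpen O)
    (hc : ¬ (f '' O).Countable) (n : ℕ) :
    ∃ O' : Set (ℕ → ℕ), IsOpen O' ∧ O' ⊆ O ∧ ¬ (f '' O').Countable ∧ ∃ z, O' ⊆ cyl z n := by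
  obtain ⟨Q, hQc, hQd⟩ := TopologicalSpace.exists_countable_dense (ℕ → ℕ)
  have hcover : O ⊆ ⋃ z ∈ Q, (cyl z n ∩ O) := by
    intro y hy
    obtain ⟨z, hz1, hz2⟩ := hQd.inter_open_nonempty (cyl y n) (isOpen_cyl y n)
      ⟨y, mem_cyl_self y n⟩
    exact mem_biUnion hz2 ⟨fun i hi => (hz1 i hi).symm, hy⟩
  by_cases hall : ∀ z ∈ Q, (f '' (cyl z n ∩ O)).Countable
  · exfalso
    apply hc
    have himg : f '' O ⊆ ⋃ z ∈ Q, f '' (cyl z n ∩ O) := by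
      rintro _ ⟨y, hy, rfl⟩
      obtain ⟨z, hz1, hz2⟩ := mem_iUnion₂.1 (hcover hy)
      exact mem_biUnion hz1 (mem_image_of_mem f hz2)
    exact (hQc.biUnion hall).mono himg
  · push_neg at hall
    obtain ⟨z, _, hz⟩ := hall
    exact ⟨cyl z n ∩ O, (isOpen_cyl z n).inter hO, inter_subset_right, hz,
      z, inter_subset_left⟩

lemma psp_step {α : Type*} [MetricSpace α] [SecondCountableTopology α]
    {f : (ℕ → ℕ) → α} (hf : Continuous f) {V : Set (ℕ → ℕ)} (hV : IsOpen V)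
    (hc : ¬ (f '' V).Countable) (n : ℕ) :
    ∃ p : Set (ℕ → ℕ) × Set (ℕ → ℕ), IsOpen p.1 ∧ IsOpen p.2 ∧ p.1 ⊆ V ∧ p.2 ⊆ V ∧
      ¬ (f '' p.1).Countable ∧ ¬ (f '' p.2).Countable ∧
      (∃ z, p.1 ⊆ cyl z n) ∧ (∃ z, p.2 ⊆ cyl z n) ∧
      Disjoint (closure (f '' p.1)) (closure (f '' p.2)) := by
  obtain ⟨y₀, y₁, hne, h₀, h₁⟩ := exists_two_condensation hc
  set d := dist y₀ y₁ with hdd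
  have hd : 0 < d := dist_pos.2 hne
  have hsubpre : ∀ y : α, f '' V ∩ Metric.ball y (d / 3) ⊆
      f '' (V ∩ f ⁻¹' Metric.ball y (d / 3)) := by
    rintro y _ ⟨⟨z, hz, rfl⟩, hball⟩
    exact ⟨z, ⟨hz, hball⟩, rfl⟩
  have hO₀ : IsOpen (V ∩ f ⁻¹' Metric.ball y₀ (d / 3)) :=
    hV.inter (Metric.isOpen_ball.preimage hf)
  have hO₁ : IsOpen (V ∩ f ⁻¹' Metric.ball y₁ (d / 3)) :=
    hV.inter (Metric.isOpen_ball.preimage hf)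
  have hc₀ : ¬ (f '' (V ∩ f ⁻¹' Metric.ball y₀ (d / 3))).Countable := fun h =>
    h₀ (Metric.ball y₀ (d / 3)) Metric.isOpen_ball (Metric.mem_ball_self (by linarith))
      (h.mono (hsubpre y₀))
  have hc₁ : ¬ (f '' (V ∩ f ⁻¹' Metric.ball y₁ (d / 3))).Countable := fun h =>
    h₁ (Metric.ball y₁ (d / 3)) Metric.isOpen_ball (Metric.mem_ball_self (by linarith))
      (h.mono (hsubpre y₁))
  obtain ⟨V₀, hV₀o, hV₀s, hV₀c, hV₀d⟩ := shrink f hO₀ hc₀ n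
  obtain ⟨V₁, hV₁o, hV₁s, hV₁c, hV₁d⟩ := shrink f hO₁ hc₁ n
  refine ⟨(V₀, V₁), hV₀o, hV₁o, hV₀s.trans inter_subset_left, hV₁s.trans inter_subset_left,
    hV₀c, hV₁c, hV₀d, hV₁d, ?_⟩
  have hcl₀ : closure (f '' V₀) ⊆ Metric.closedBall y₀ (d / 3) := by
    refine (closure_mono ?_).trans Metric.closure_ball_subset_closedBall
    rintro _ ⟨z, hz, rfl⟩
    exact (hV₀s hz).2
  have hcl₁ : closure (f '' V₁) ⊆ Metric.closedBall y₁ (d / 3) := by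
    refine (closure_mono ?_).trans Metric.closure_ball_subset_closedBall
    rintro _ ⟨z, hz, rfl⟩
    exact (hV₁s hz).2
  rw [Set.disjoint_left]
  intro a ha₀ ha₁
  have hb₀ := Metric.mem_closedBall.1 (hcl₀ ha₀)
  have hb₁ := Metric.mem_closedBall.1 (hcl₁ ha₁)
  have htri : dist y₀ y₁ ≤ dist a y₀ + dist a y₁ := dist_triangle_left _ _ _
  rw [← hdd] at htri
  linarith

/-- Cantor scheme built from a chosen splitting function. -/
def scheme (F : Set (ℕ → ℕ) → ℕ → Set (ℕ → ℕ) × Set (ℕ → ℕ)) : List Bool → Set (ℕ → ℕ)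
  | [] => Set.univ
  | false :: t => (F (scheme F t) t.length).1
  | true :: t => (F (scheme F t) t.length).2

/-- Finite initial segments of a binary sequence, most recent first. -/
def res (b : ℕ → Bool) : ℕ → List Bool
  | 0 => []
  | n + 1 => b n :: res b n

lemma res_length (b : ℕ → Bool) : ∀ n, (res b n).length = n
  | 0 => rfl
  | n + 1 => by simp [res, res_length b n]

lemma res_congr {b b' : ℕ → Bool} : ∀ n, (∀ i, i < n → b i = b' i) → res b n = res b' n
  | 0, _ => rfl
  | n + 1, h => by
    simp only [res]
    rw [h n (Nat.lt_succ_self n), res_congr n fun i hi => h i (hi.trans (Nat.lt_succ_self n))]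

/-- Perfect set property for analytic sets: an uncountable analytic set contains a
continuous injective image of the Cantor space. -/
lemma analytic_psp {α : Type*} [MetricSpace α] [SecondCountableTopology α]
    {A : Set α} (hA : AnalyticSet A) (hunc : ¬ A.Countable) :
    ∃ g : (ℕ → Bool) → α, Continuous g ∧ Function.Injective g ∧ range g ⊆ A := by
  rw [AnalyticSet] at hA
  rcases hA with h | ⟨f, hfc, hfr⟩
  · exact absurd (h ▸ countable_empty) hunc
  have hunc' : ¬ (f '' (univ : Set (ℕ → ℕ))).Countable := by rwa [image_univ, hfr]
  have key : ∀ (V : Set (ℕ → ℕ)) (n : ℕ), ∃ p : Set (ℕ → ℕ) × Set (ℕ → ℕ),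
      IsOpen V → ¬ (f '' V).Countable →
      (IsOpen p.1 ∧ IsOpen p.2 ∧ p.1 ⊆ V ∧ p.2 ⊆ V ∧ ¬ (f '' p.1).Countable ∧
       ¬ (f '' p.2).Countable ∧ (∃ z, p.1 ⊆ cyl z n) ∧ (∃ z, p.2 ⊆ cyl z n) ∧
       Disjoint (closure (f '' p.1)) (closure (f '' p.2))) := by
    intro V n
    by_cases h : IsOpen V ∧ ¬ (f '' V).Countable
    · obtain ⟨p, hp⟩ := psp_step hfc h.1 h.2 n
      exact ⟨p, fun _ _ => hp⟩
    · exact ⟨(∅, ∅), fun h1 h2 => absurd ⟨h1, h2⟩ h⟩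
  choose F hF using key
  set Vs : List Bool → Set (ℕ → ℕ) := scheme F with hVsdef
  have inv : ∀ s : List Bool, IsOpen (Vs s) ∧ ¬ (f '' Vs s).Countable := by
    intro s
    induction s with
    | nil => exact ⟨isOpen_univ, hunc'⟩
    | cons i t ih =>
      have h := hF (Vs t) t.length ih.1 ih.2
      cases i
      · exact ⟨h.1, h.2.2.2.2.1⟩
      · exact ⟨h.2.1, h.2.2.2.2.2.1⟩
  have spec := fun t : List Bool => hF (Vs t) t.length (inv t).1 (inv t).2
  have childsub : ∀ (t : List Bool) (i : Bool), Vs (i :: t) ⊆ Vs t := by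
    intro t i
    cases i
    · exact (spec t).2.2.1
    · exact (spec t).2.2.2.1
  have childcyl : ∀ (t : List Bool) (i : Bool), ∃ z, Vs (i :: t) ⊆ cyl z t.length := by
    intro t i
    cases i
    · exact (spec t).2.2.2.2.2.2.1
    · exact (spec t).2.2.2.2.2.2.2.1
  have childdisj : ∀ t : List Bool,
      Disjoint (closure (f '' Vs (false :: t))) (closure (f '' Vs (true :: t))) := fun t =>
    (spec t).2.2.2.2.2.2.2.2
  have hne : ∀ s : List Bool, (Vs s).Nonempty := fun s =>
    Set.Nonempty.of_image (nonempty_iff_ne_empty.2 fun h => (inv s).2 (h ▸ countable_empty))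
  choose x hx using hne
  have chain : ∀ (b : ℕ → Bool) (n k : ℕ), Vs (res b (n + k)) ⊆ Vs (res b n) := by
    intro b n k
    induction k with
    | zero => exact Subset.rfl
    | succ k ih => exact (childsub (res b (n + k)) (b (n + k))).trans ih
  have hmem : ∀ (b : ℕ → Bool) (n m : ℕ), n ≤ m → x (res b (m + 1)) ∈ Vs (res b (n + 1)) := by
    intro b n m hnm
    have h1 : Vs (res b ((n + 1) + (m - n))) ⊆ Vs (res b (n + 1)) := chain b (n + 1) (m - n)
    rw [show (n + 1) + (m - n) = m + 1 by omega] at h1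
    exact h1 (hx _)
  -- points of `Vs (res b (n+1))` agree on coordinates `< n`
  have stable : ∀ (b : ℕ → Bool) (n i : ℕ), i < n → ∀ {y y' : ℕ → ℕ},
      y ∈ Vs (res b (n + 1)) → y' ∈ Vs (res b (n + 1)) → y i = y' i := by
    intro b n i hi y y' hy hy'
    obtain ⟨z, hz⟩ := childcyl (res b n) (b n)
    rw [res_length] at hz
    have h1 : y ∈ cyl z n := hz hy
    have h2 : y' ∈ cyl z n := hz hy'
    rw [h1 i hi, h2 i hi]
  -- the limit point
  set xat : (ℕ → Bool) → (ℕ → ℕ) := fun b i => x (res b (i + 2)) i with hxatdef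
  have hxat_eq : ∀ (b : ℕ → Bool) (i m : ℕ), i < m →
      x (res b (m + 1)) i = x (res b (i + 1 + 1)) i := by
    intro b i m him
    exact stable b (i + 1) i (Nat.lt_succ_self i) (hmem b (i + 1) m (by omega)) (hx _)
  have hconv : ∀ b : ℕ → Bool, Tendsto (fun m => x (res b (m + 1))) atTop (𝓝 (xat b)) := by
    intro b
    rw [tendsto_pi_nhds]
    intro i
    refine tendsto_atTop_of_eventually_const (i₀ := i + 1) fun m hm => ?_
    exact hxat_eq b i m (by omega)  -- defeq to `xat b i`
  have hmemcl : ∀ (b : ℕ → Bool) (n : ℕ), xat b ∈ closure (Vs (res b (n + 1))) := by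
    intro b n
    exact mem_closure_of_tendsto (hconv b)
      (eventually_atTop.2 ⟨n, fun m hm => hmem b n m hm⟩)
  have hcyl_nbhd : ∀ (b : ℕ → Bool) (n : ℕ),
      {b' : ℕ → Bool | ∀ i ∈ Finset.range n, b' i = b i} ∈ 𝓝 b := by
    intro b n
    have hOset : {b' : ℕ → Bool | ∀ i ∈ Finset.range n, b' i = b i} =
        ⋂ i ∈ Finset.range n, (fun b' : ℕ → Bool => b' i) ⁻¹' {b i} := by
      ext w; simp
    have hO : IsOpen {b' : ℕ → Bool | ∀ i ∈ Finset.range n, b' i = b i} := by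
      rw [hOset]
      exact isOpen_biInter_finset fun i _ =>
        (continuous_apply i).isOpen_preimage _ (isOpen_discrete _)
    exact hO.mem_nhds (by simp)
  have hcont : Continuous xat := by
    rw [continuous_pi_iff]
    intro i
    rw [continuous_iff_continuousAt]
    intro b
    have hev : (fun b' => xat b' i) =ᶠ[𝓝 b] fun _ => xat b i := by
      filter_upwards [hcyl_nbhd b (i + 2)] with b' hb'
      have hres : res b' (i + 2) = res b (i + 2) :=
        res_congr (i + 2) fun j hj => hb' j (Finset.mem_range.2 hj)
      show x (res b' (i + 2)) i = xat b i
      rw [hres]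
    exact (tendsto_const_nhds.congr' hev.symm : _)
  have hinj : Function.Injective (f ∘ xat) := by
    intro b b' hbb
    simp only [Function.comp] at hbb
    by_contra hnebb
    have hD : ∃ n, b n ≠ b' n := by
      by_contra h
      push_neg at h
      exact hnebb (funext h)
    classical
    have hn : b (Nat.find hD) ≠ b' (Nat.find hD) := Nat.find_spec hD
    set n := Nat.find hD with hndef
    have hagree : ∀ i, i < n → b i = b' i := fun i hi => by
      by_contra hne2
      exact Nat.find_min hD hi hne2
    have hresn : res b n = res b' n := res_congr n hagree
    have m1 : f (xat b) ∈ closure (f '' Vs (res b (n + 1))) :=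
      image_closure_subset_closure_image hfc ⟨xat b, hmemcl b n, rfl⟩
    have m2 : f (xat b') ∈ closure (f '' Vs (res b' (n + 1))) :=
      image_closure_subset_closure_image hfc ⟨xat b', hmemcl b' n, rfl⟩
    have hrb : res b (n + 1) = b n :: res b n := rfl
    have hrb' : res b' (n + 1) = b' n :: res b n := by rw [show res b' (n+1) = b' n :: res b' n from rfl, hresn]
    rw [hrb] at m1
    rw [hrb'] at m2
    cases hbn : b n
    · have hb'n : b' n = true := by
        cases hb'n : b' n
        · exact absurd (hbn.trans hb'n.symm) hn
        · rfl
      rw [hbn] at m1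
      rw [hb'n] at m2
      exact (childdisj (res b n)).ne_of_mem m1 m2 hbb
    · have hb'n : b' n = false := by
        cases hb'n : b' n
        · rfl
        · exact absurd (hbn.trans hb'n.symm) hn
      rw [hbn] at m1
      rw [hb'n] at m2
      exact (childdisj (res b n)).ne_of_mem m2 m1 hbb.symm
  refine ⟨f ∘ xat, hfc.comp hcont, hinj, ?_⟩
  rw [← hfr]
  exact range_comp_subset_range xat f

end CDHBaireAux

open CDHBaireAux

/-- An analytic CDH subspace of a Polish space without isolated points is a Baire space. -/
theorem baire_of_analytic_CDH
    (P : Type*) [TopologicalSpace P] [PolishSpace P] (X : Set P)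
    (hA : MeasureTheory.AnalyticSet X)
    (hiso : ∀ x : ↥X, ¬ IsOpen ({x} : Set ↥X))
    (hCDH : IsCDH ↥X) :
    BaireSpace ↥X := by
  letI := TopologicalSpace.upgradeIsCompletelyMetrizable P
  by_contra hB
  -- a nonempty open meagre set exists
  obtain ⟨o, ho, hd, hnd⟩ : ∃ o : ℕ → Set ↥X, (∀ n, IsOpen (o n)) ∧ (∀ n, Dense (o n)) ∧
      ¬ Dense (⋂ n, o n) := by
    by_contra h
    push_neg at h
    exact hB ⟨fun o ho hd => h o ho hd⟩
  rw [dense_iff_inter_open] at hnd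
  push_neg at hnd
  obtain ⟨V, hVo, hVne, hVdisj⟩ := hnd
  have hVm : IsMeagre V := by
    have hres : (⋂ n, o n) ∈ residual ↥X :=
      countable_iInter_mem.2 fun n => residual_of_dense_open (ho n) (hd n)
    have hm : IsMeagre ((⋂ n, o n)ᶜ) := by rw [IsMeagre, compl_compl]; exact hres
    refine hm.mono (s := (⋂ n, o n)ᶜ) fun z hz hzT => ?_
    exact eq_empty_iff_forall_notMem.1 hVdisj z ⟨hz, hzT⟩
  -- the union of all open meagre sets
  set W : Set ↥X := ⋃₀ {U | IsOpen U ∧ IsMeagre U} with hWdef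
  have hWo : IsOpen W := isOpen_sUnion fun _ h => h.1
  obtain ⟨w₀, hw₀V⟩ := hVne
  have hw₀ : w₀ ∈ W := ⟨V, ⟨hVo, hVm⟩, hw₀V⟩
  obtain ⟨b, hbc, -, hb⟩ := TopologicalSpace.exists_countable_basis ↥X
  have hWm : IsMeagre W := by
    have hsub : W ⊆ ⋃₀ {B ∈ b | IsMeagre B} := by
      rintro z ⟨U0, ⟨hU0o, hU0m⟩, hzU0⟩
      obtain ⟨B, hBb, hzB, hBU⟩ := hb.exists_subset_of_mem_open hzU0 hU0o
      exact ⟨B, ⟨hBb, hU0m.mono hBU⟩, hzB⟩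
    have hm : IsMeagre (⋃₀ {B ∈ b | IsMeagre B}) := by
      rw [IsMeagre, Set.compl_sUnion]
      refine (countable_sInter_mem ((hbc.mono (sep_subset _ _)).image _)).2 ?_
      rintro t ⟨B, hB, rfl⟩
      exact hB.2
    exact hm.mono hsub
  -- W is invariant under all self-homeomorphisms
  have hWsub : ∀ e : ↥X ≃ₜ ↥X, ⇑e '' W ⊆ W := by
    rintro e _ ⟨z, ⟨U0, ⟨hU0o, hU0m⟩, hzU0⟩, rfl⟩
    exact ⟨⇑e '' U0, ⟨(Homeomorph.isOpen_image e).2 hU0o, isMeagre_image e hU0m⟩,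
      mem_image_of_mem _ hzU0⟩
  have hWinv : ∀ e : ↥X ≃ₜ ↥X, ⇑e '' W = W := by
    intro e
    refine subset_antisymm (hWsub e) fun z hz => ?_
    exact ⟨e.symm z, hWsub e.symm ⟨z, hz, rfl⟩, e.apply_symm_apply z⟩
  obtain ⟨S, hSc, hSd⟩ := TopologicalSpace.exists_countable_dense ↥X
  have keydense : ∀ E : Set ↥X, W ⊆ closure E → Dense (E ∪ (S \ closure W)) := by
    intro E hE
    intro z
    by_cases hz : z ∈ closure W
    · have h1 : closure W ⊆ closure E := closure_minimal hE isClosed_closure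
      exact closure_mono subset_union_left (h1 hz)
    · have h1 : z ∈ closure ((closure W)ᶜ ∩ S) :=
        hSd.open_subset_closure_inter isClosed_closure.isOpen_compl hz
      refine closure_mono ?_ h1
      rintro w ⟨hw1, hw2⟩
      exact Or.inr ⟨hw2, hw1⟩
  by_cases hWc : W.Countable
  · -- countable case : remove one point of W
    have hWd : W ⊆ closure (W \ {w₀}) := by
      intro z hz
      by_cases hzw : z = w₀
      · subst hzw
        by_contra hcl
        have hOopen : IsOpen ((closure (W \ {z}))ᶜ ∩ W) :=
          isClosed_closure.isOpen_compl.inter hWo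
        have hOeq : (closure (W \ {z}))ᶜ ∩ W = {z} := by
          apply subset_antisymm
          · rintro w ⟨hw1, hw2⟩
            by_contra hwz
            exact hw1 (subset_closure ⟨hw2, hwz⟩)
          · rintro w rfl
            exact ⟨hcl, hz⟩
        exact hiso z (hOeq ▸ hOopen)
      · exact subset_closure ⟨hz, hzw⟩
    obtain ⟨e, he⟩ := hCDH (S ∪ W) ((W \ {w₀}) ∪ (S \ closure W))
      (hSc.union hWc) (hSd.mono subset_union_left)
      ((hWc.mono diff_subset).union (hSc.mono diff_subset))
      (keydense _ hWd)
    have h1 : ⇑e '' ((S ∪ W) ∩ W) = ((W \ {w₀}) ∪ (S \ closure W)) ∩ W := by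
      rw [Set.image_inter e.injective, he, hWinv e]
    have h2 : (S ∪ W) ∩ W = W := inter_eq_right.2 subset_union_right
    have h3 : ((W \ {w₀}) ∪ (S \ closure W)) ∩ W = W \ {w₀} := by
      apply subset_antisymm
      · rintro z ⟨hz1 | hz2, hzW⟩
        · exact hz1
        · exact absurd (subset_closure hzW) hz2.2
      · exact fun z hz => ⟨Or.inl hz, hz.1⟩
    rw [h2, h3, hWinv e] at h1
    exact ((h1 ▸ hw₀) : w₀ ∈ W \ {w₀}).2 rfl
  · -- uncountable case : find a Cantor set inside W
    obtain ⟨U, hUopen, hUpre⟩ := isOpen_induced_iff.1 hWo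
    have hAU : AnalyticSet (X ∩ U) := by
      rw [AnalyticSet] at hA
      rcases hA with h | ⟨f0, hf0c, hf0r⟩
      · rw [h, empty_inter]; exact analyticSet_empty
      · have hEq : X ∩ U = f0 '' (f0 ⁻¹' U) := by
          rw [image_preimage_eq_inter_range, hf0r, inter_comm]
        rw [hEq]
        exact (hUopen.preimage hf0c).analyticSet_image hf0c
    have hXU : ¬ (X ∩ U).Countable := by
      intro h
      apply hWc
      have hsub : W ⊆ Subtype.val ⁻¹' (X ∩ U) := by
        intro z hz
        exact ⟨z.2, by rwa [← hUpre] at hz⟩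
      exact ((h.preimage Subtype.val_injective).mono hsub)
    obtain ⟨g, hgc, hgi, hgr⟩ := analytic_psp hAU hXU
    set gY : (ℕ → Bool) → ↥X := fun c => ⟨g c, (hgr ⟨c, rfl⟩).1⟩ with hgYdef
    have hgYc : Continuous gY := hgc.subtype_mk _
    have hgYi : Function.Injective gY := fun a c h => hgi (congrArg Subtype.val h)
    have hgYW : ∀ c, gY c ∈ W := by
      intro c
      rw [← hUpre]
      exact (hgr ⟨c, rfl⟩).2
    -- a countable dense subset of W that is relatively Gδ
    have hWm' := hWm
    rw [IsMeagre, mem_residual_iff] at hWm'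
    obtain ⟨Sc, hSco, hScd, hScc, hScsub⟩ := hWm'
    obtain ⟨u, hu⟩ := (hScc.insert univ).exists_eq_range (insert_nonempty _ _)
    have huo : ∀ n, IsOpen (u n) ∧ Dense (u n) := by
      intro n
      have hmemu : u n ∈ insert univ Sc := hu ▸ mem_range_self n
      rcases hmemu with h | h
      · rw [h]; exact ⟨isOpen_univ, dense_univ⟩
      · exact ⟨hSco _ h, hScd _ h⟩
    have hWcover : ∀ z ∈ W, ∃ n, z ∉ u n := by
      intro z hz
      have hni : z ∉ ⋂₀ Sc := fun hzi => hScsub hzi hz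
      rw [mem_sInter] at hni
      push_neg at hni
      obtain ⟨t, htS, hzt⟩ := hni
      have hmemu : t ∈ range u := hu ▸ mem_insert_of_mem _ htS
      obtain ⟨n, rfl⟩ := hmemu
      exact ⟨n, hzt⟩
    have hGs : ∀ k : ℕ, IsOpen (⋂ n ∈ Finset.range k, u n) ∧
        Dense (⋂ n ∈ Finset.range k, u n) := by
      intro k
      induction k with
      | zero => simpa using ⟨isOpen_univ, dense_univ⟩
      | succ k ih =>
        rw [Finset.range_add_one, Finset.set_biInter_insert]
        exact ⟨(huo k).1.inter ih.1, ((huo k).2.inter_of_isOpen_left ih.2 (huo k).1)⟩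
    have hbWne : {B ∈ b | (B ∩ W).Nonempty}.Nonempty := by
      obtain ⟨B, hBb, hzB, -⟩ := hb.exists_subset_of_mem_open (mem_univ w₀) isOpen_univ
      exact ⟨B, hBb, ⟨w₀, hzB, hw₀⟩⟩
    obtain ⟨e0, he0⟩ := (hbc.mono (sep_subset _ _)).exists_eq_range hbWne
    have he0k : ∀ k : ℕ, e0 k ∈ b ∧ (e0 k ∩ W).Nonempty := by
      intro k
      have hmem : e0 k ∈ {B ∈ b | (B ∩ W).Nonempty} := by rw [he0]; exact mem_range_self k
      exact hmem
    have hpick : ∀ k : ℕ, ((e0 k ∩ W) ∩ ⋂ n ∈ Finset.range (k + 1), u n).Nonempty := fun k =>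
      (hGs (k + 1)).2.inter_open_nonempty _ ((hb.isOpen (he0k k).1).inter hWo) (he0k k).2
    choose dd hdd using hpick
    have hD'W_sub : range dd ⊆ W := by
      rintro _ ⟨k, rfl⟩
      exact (hdd k).1.2
    have hD'W_dense : W ⊆ closure (range dd) := by
      intro z hz
      rw [mem_closure_iff]
      intro O hO hzO
      obtain ⟨B, hBb, hzB, hBO⟩ := hb.exists_subset_of_mem_open hzO hO
      have hBmem : B ∈ range e0 := by
        rw [← he0]
        exact ⟨hBb, ⟨z, hzB, hz⟩⟩
      obtain ⟨k, rfl⟩ := hBmem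
      exact ⟨dd k, hBO (hdd k).1.1, mem_range_self k⟩
    have hfin : ∀ n, (range dd ∩ (u n)ᶜ) ⊆ dd '' (Iio n) := by
      rintro n _ ⟨⟨k, rfl⟩, hk⟩
      refine ⟨k, ?_, rfl⟩
      rw [mem_Iio]
      by_contra hkn
      push_neg at hkn
      exact hk (mem_iInter₂.1 (hdd k).2 n (Finset.mem_range.2 (by omega)))
    have hTg : IsGδ (⋂ n, (u n ∪ (range dd ∩ (u n)ᶜ))) := by
      refine IsGδ.iInter fun n => ((huo n).1.isGδ).union ?_
      exact (((Set.finite_Iio n).image dd).subset (hfin n)).isClosed.isGδ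
    have hTeq : (⋂ n, (u n ∪ (range dd ∩ (u n)ᶜ))) ∩ W = range dd := by
      apply subset_antisymm
      · rintro z ⟨hzT, hzW⟩
        obtain ⟨n, hn⟩ := hWcover z hzW
        rcases mem_iInter.1 hzT n with h | h
        · exact absurd h hn
        · exact h.1
      · intro z hz
        refine ⟨mem_iInter.2 fun n => ?_, hD'W_sub hz⟩
        by_cases hzu : z ∈ u n
        · exact Or.inl hzu
        · exact Or.inr ⟨hz, hzu⟩
    obtain ⟨E0, hE0c, hE0d⟩ := TopologicalSpace.exists_countable_dense (ℕ → Bool)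
    obtain ⟨e, he⟩ := hCDH ((gY '' E0) ∪ S) (range dd ∪ (S \ closure W))
      ((hE0c.image _).union hSc) (hSd.mono subset_union_right)
      ((countable_range dd).union (hSc.mono diff_subset))
      (keydense _ hD'W_dense)
    have h3 : (range dd ∪ (S \ closure W)) ∩ W = range dd := by
      apply subset_antisymm
      · rintro z ⟨hz1 | hz2, hzW⟩
        · exact hz1
        · exact absurd (subset_closure hzW) hz2.2
      · exact fun z hz => ⟨Or.inl hz, hD'W_sub hz⟩
    have h1 : ⇑e '' (((gY '' E0) ∪ S) ∩ W) = range dd := by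
      rw [Set.image_inter e.injective, he, hWinv e, h3]
    have hApre : ((gY '' E0) ∪ S) ∩ W = ⇑e ⁻¹' (range dd) := by
      rw [← h1, preimage_image_eq _ e.injective]
    have heW : ⇑e ⁻¹' W = W := by
      have hpre : ⇑e ⁻¹' (⇑e '' W) = W := preimage_image_eq _ e.injective
      rwa [hWinv e] at hpre
    have hApre' : ((gY '' E0) ∪ S) ∩ W =
        ⇑e ⁻¹' (⋂ n, (u n ∪ (range dd ∩ (u n)ᶜ))) ∩ W := by
      rw [hApre]
      conv_lhs => rw [← hTeq]
      rw [preimage_inter, heW]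
    -- pull everything back to the Cantor space
    have hgYuniv : gY ⁻¹' W = univ := eq_univ_of_forall hgYW
    have hA₀eq : gY ⁻¹' (((gY '' E0) ∪ S) ∩ W) =
        gY ⁻¹' (⇑e ⁻¹' (⋂ n, (u n ∪ (range dd ∩ (u n)ᶜ)))) := by
      rw [hApre', preimage_inter, hgYuniv, inter_univ]
    have hA₀g : IsGδ (gY ⁻¹' (((gY '' E0) ∪ S) ∩ W)) := by
      rw [hA₀eq]
      exact isGδ_preimage hgYc (isGδ_preimage e.continuous hTg)
    have hA₀c : (gY ⁻¹' (((gY '' E0) ∪ S) ∩ W)).Countable :=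
      (((hE0c.image gY).union hSc).mono inter_subset_left).preimage hgYi
    have hA₀d : Dense (gY ⁻¹' (((gY '' E0) ∪ S) ∩ W)) := by
      refine hE0d.mono fun c hc => ?_
      exact ⟨Or.inl (mem_image_of_mem gY hc), hgYW c⟩
    exact not_dense_gdelta cantor_singleton_not_open hA₀c hA₀d hA₀g
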